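/- Let σ² > 0 and let M̂ = (JᵀJ + 2ⁿ diag(c))⁻¹ JᵀJ with c_T = 2^{|T|} σ². If T, T' ⊆ N satisfy |T| = |T'|, then the rows of M̂ indexed by T and by T' have equal Euclidean norms: ‖m̂_T‖₂ = ‖m̂_{T'}‖₂. (In fact, m̂_T is a permutation of m̂_{T'}.) -/

import Mathlib

open Matrix Finset BigOperators

/-- The `2^n × 2^n` interaction-triggering matrix, with rows and columns indexed by
the subsets of `N = {1,…,n}`: `J S T = 1` if `T ⊆ S` and `0` otherwise. -/
noncomputable def Jmat (n : ℕ) : Matrix (Finset (Fin n)) (Finset (Fin n)) ℝ :=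
  fun S T => if T ⊆ S then 1 else 0

/-- `M̂(σ²) = (JᵀJ + 2ⁿ diag(c))⁻¹ JᵀJ` with `c_T = 2^{|T|} σ²`. -/
noncomputable def Mhat (n : ℕ) (σ2 : ℝ) :
    Matrix (Finset (Fin n)) (Finset (Fin n)) ℝ :=
  ((Jmat n)ᵀ * Jmat n
      + (2 ^ n : ℝ) • Matrix.diagonal (fun T : Finset (Fin n) => 2 ^ T.card * σ2))⁻¹
    * ((Jmat n)ᵀ * Jmat n)

/-- A permutation of `Fin n` sending `T` onto `T'` when they have equal card. -/
lemma exists_perm_map (n : ℕ) (T T' : Finset (Fin n)) (hcard : T.card = T'.card) :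
    ∃ e : Equiv.Perm (Fin n), T.map e.toEmbedding = T' := by
  classical
  have hc : Tᶜ.card = T'ᶜ.card := by
    simp [Finset.card_compl, hcard]
  let f : {x // x ∈ T} ≃ {x // x ∈ T'} := Finset.equivOfCardEq hcard
  let g : {x // x ∈ Tᶜ} ≃ {x // x ∈ T'ᶜ} := Finset.equivOfCardEq hc
  let g' : {x // x ∉ T} ≃ {x // x ∉ T'} :=
    (Equiv.subtypeEquivRight (fun x => by simp)).trans
      (g.trans (Equiv.subtypeEquivRight (fun x => by simp)))
  let e : Equiv.Perm (Fin n) :=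
    ((Equiv.sumCompl (· ∈ T)).symm.trans ((f.sumCongr g'))).trans (Equiv.sumCompl (· ∈ T'))
  refine ⟨e, ?_⟩
  have hmem : ∀ x ∈ T, e x ∈ T' := by
    intro x hx
    have : (Equiv.sumCompl (· ∈ T)).symm x = Sum.inl ⟨x, hx⟩ := by
      exact Equiv.sumCompl_symm_apply_of_pos hx
    simp [e, this]
  apply Finset.eq_of_subset_of_card_le
  · intro y hy
    simp only [Finset.mem_map] at hy
    obtain ⟨x, hx, rfl⟩ := hy
    exact hmem x hx
  · simp [hcard]

lemma mhat_invariant (n : ℕ) (σ2 : ℝ) (e : Equiv.Perm (Fin n)) :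
    (Mhat n σ2).submatrix e.finsetCongr e.finsetCongr = Mhat n σ2 := by
  classical
  have hJ : (Jmat n).submatrix e.finsetCongr e.finsetCongr = Jmat n := by
    ext S U
    simp only [Matrix.submatrix_apply, Jmat, Equiv.finsetCongr_apply]
    congr 1
    simp only [eq_iff_iff]
    constructor
    · intro h x hx
      have := h (Finset.mem_map_of_mem _ hx)
      simpa using this
    · exact fun h => Finset.map_subset_map.mpr h
  have hD : (Matrix.diagonal (fun T : Finset (Fin n) => (2:ℝ) ^ T.card * σ2)).submatrix
      e.finsetCongr e.finsetCongr
      = Matrix.diagonal (fun T : Finset (Fin n) => (2:ℝ) ^ T.card * σ2) := by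
    rw [Matrix.submatrix_diagonal_equiv]
    have : (fun T : Finset (Fin n) => (2:ℝ) ^ T.card * σ2) ∘ e.finsetCongr
        = fun T : Finset (Fin n) => (2:ℝ) ^ T.card * σ2 := by
      funext S
      simp [Equiv.finsetCongr_apply]
    rw [this]
  have hJJ : ((Jmat n)ᵀ * Jmat n).submatrix e.finsetCongr e.finsetCongr
      = (Jmat n)ᵀ * Jmat n := by
    rw [← Matrix.submatrix_mul_equiv _ _ _ e.finsetCongr, ← Matrix.transpose_submatrix, hJ]
  unfold Mhat
  rw [← Matrix.submatrix_mul_equiv _ _ _ e.finsetCongr, ← Matrix.inv_submatrix_equiv]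
  simp only [Matrix.submatrix_add, Matrix.submatrix_smul, Pi.add_apply, Pi.smul_apply]
  rw [hD, hJJ]

set_option maxHeartbeats 1600000 in
/-- Rows of `M̂` indexed by subsets of the same order have equal Euclidean norms. -/
theorem mhat_rows_same_order_same_norm (n : ℕ) (hn : 1 ≤ n) (σ2 : ℝ) (hσ : 0 < σ2)
    (T T' : Finset (Fin n)) (hcard : T.card = T'.card) :
    Real.sqrt (∑ S : Finset (Fin n), Mhat n σ2 T S ^ 2)
      = Real.sqrt (∑ S : Finset (Fin n), Mhat n σ2 T' S ^ 2) := by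
  classical
  obtain ⟨e, he⟩ := exists_perm_map n T T' hcard
  have hinv := mhat_invariant n σ2 e
  have hentry : ∀ A B, Mhat n σ2 (e.finsetCongr A) (e.finsetCongr B) = Mhat n σ2 A B := by
    intro A B
    conv_rhs => rw [← hinv]
    rw [Matrix.submatrix_apply]
  congr 1
  rw [← Equiv.sum_comp e.finsetCongr (fun S => Mhat n σ2 T' S ^ 2)]
  apply Finset.sum_congr rfl
  intro S _
  rw [← hentry T S]
  have hT : e.finsetCongr T = T' := by simpa [Equiv.finsetCongr_apply] using he
  rw [hT]
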